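/- Define, for r ∈ (1, √3), k(r) = √((1 + r²)(3 − r²))/(2r) and F(r) = ((1 − r²)/r)·K(k(r)) + 2r·E(k(r)), where K and E are the complete elliptic integrals of the first and second kind. Then lim_{r → 1⁺} F(r) = 2 and lim_{r → √3⁻} F(r) = 2π/√3. -/

import Mathlib

open Real Filter

/-- The complete elliptic integral of the first kind. -/
noncomputable def ellipticK (k : ℝ) : ℝ :=
  ∫ x in (0 : ℝ)..(π / 2), (Real.sqrt (1 - k ^ 2 * Real.sin x ^ 2))⁻¹

/-- The complete elliptic integral of the second kind. -/
noncomputable def ellipticE (k : ℝ) : ℝ :=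
  ∫ x in (0 : ℝ)..(π / 2), Real.sqrt (1 - k ^ 2 * Real.sin x ^ 2)

/-- The modulus `k(r) = √((1+r²)(3−r²))/(2r)`. -/
noncomputable def kmod (r : ℝ) : ℝ := Real.sqrt ((1 + r ^ 2) * (3 - r ^ 2)) / (2 * r)

/-- The area function `F(r) = ((1−r²)/r)K(k(r)) + 2rE(k(r))`. -/
noncomputable def Ffun (r : ℝ) : ℝ :=
  ((1 - r ^ 2) / r) * ellipticK (kmod r) + 2 * r * ellipticE (kmod r)

lemma ellipticE_continuous : Continuous ellipticE := by
  apply intervalIntegral.continuous_parametric_intervalIntegral_of_continuous'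
    (f := fun k x => Real.sqrt (1 - k ^ 2 * Real.sin x ^ 2))
  apply Real.continuous_sqrt.comp
  fun_prop

lemma ellipticE_one : ellipticE 1 = 1 := by
  unfold ellipticE
  have h : (∫ x in (0:ℝ)..(π/2), Real.sqrt (1 - 1 ^ 2 * Real.sin x ^ 2))
      = ∫ x in (0:ℝ)..(π/2), Real.cos x := by
    apply intervalIntegral.integral_congr
    intro x hx
    rw [Set.uIcc_of_le (by positivity)] at hx
    have hc : 0 ≤ Real.cos x := Real.cos_nonneg_of_mem_Icc
      ⟨by linarith [hx.1, Real.pi_pos], hx.2⟩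
    simp only [one_pow, one_mul]
    rw [show (1 : ℝ) - Real.sin x ^ 2 = Real.cos x ^ 2 by
      nlinarith [Real.sin_sq_add_cos_sq x], Real.sqrt_sq hc]
  rw [h, integral_cos]
  simp

lemma ellipticK_tendsto_zero : Tendsto ellipticK (nhds 0) (nhds (π / 2)) := by
  have hcont : Continuous fun k : ℝ => ∫ x in (0:ℝ)..(π/2),
      (Real.sqrt (max (3/4) (1 - k ^ 2 * Real.sin x ^ 2)))⁻¹ := by
    apply intervalIntegral.continuous_parametric_intervalIntegral_of_continuous'
      (f := fun k x => (Real.sqrt (max (3/4) (1 - k ^ 2 * Real.sin x ^ 2)))⁻¹)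
    apply Continuous.inv₀
    · exact Real.continuous_sqrt.comp (by fun_prop)
    · intro p
      have : (3/4 : ℝ) ≤ max (3/4) (1 - p.1 ^ 2 * Real.sin p.2 ^ 2) := le_max_left _ _
      positivity
  have heq : ∀ᶠ k in nhds (0:ℝ), ellipticK k = ∫ x in (0:ℝ)..(π/2),
      (Real.sqrt (max (3/4) (1 - k ^ 2 * Real.sin x ^ 2)))⁻¹ := by
    filter_upwards [Metric.ball_mem_nhds (0:ℝ) (by norm_num : (0:ℝ) < 1/2)] with k hk
    apply intervalIntegral.integral_congr
    intro x _
    show (Real.sqrt (1 - k ^ 2 * Real.sin x ^ 2))⁻¹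
      = (Real.sqrt (max (3/4) (1 - k ^ 2 * Real.sin x ^ 2)))⁻¹
    rw [max_eq_right]
    have hk' : |k| < 1/2 := by simpa [Real.dist_eq] using hk
    have : k ^ 2 ≤ (1/2)^2 := by
      rw [← sq_abs]; exact pow_le_pow_left₀ (abs_nonneg k) hk'.le 2
    nlinarith [Real.sin_sq_le_one x, sq_nonneg (Real.sin x), sq_nonneg k]
  have hval : (∫ x in (0:ℝ)..(π/2),
      (Real.sqrt (max (3/4) (1 - (0:ℝ) ^ 2 * Real.sin x ^ 2)))⁻¹) = π / 2 := by
    norm_num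
  have ht := hcont.tendsto 0
  rw [hval] at ht
  exact ht.congr' (EventuallyEq.symm heq)

lemma ellipticK_nonneg (k : ℝ) : 0 ≤ ellipticK k := by
  apply intervalIntegral.integral_nonneg (by positivity)
  intro x _
  positivity

lemma ellipticE_zero : ellipticE 0 = π / 2 := by
  simp [ellipticE]

lemma ellipticK_le {k : ℝ} (hk : k ^ 2 < 1) :
    ellipticK k ≤ π / 2 * (Real.sqrt (1 - k ^ 2))⁻¹ := by
  have hpos : ∀ x : ℝ, 0 < 1 - k ^ 2 * Real.sin x ^ 2 := fun x => by
    nlinarith [Real.sin_sq_le_one x, sq_nonneg k, sq_nonneg (Real.sin x)]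
  have hint : IntervalIntegrable (fun x => (Real.sqrt (1 - k ^ 2 * Real.sin x ^ 2))⁻¹)
      MeasureTheory.volume 0 (π/2) := by
    apply Continuous.intervalIntegrable
    apply Continuous.inv₀ (Real.continuous_sqrt.comp (by fun_prop))
    intro x
    exact ne_of_gt (Real.sqrt_pos.mpr (hpos x))
  have hle : ellipticK k ≤ ∫ _x in (0:ℝ)..(π/2), (Real.sqrt (1 - k ^ 2))⁻¹ := by
    apply intervalIntegral.integral_mono_on (by positivity) hint intervalIntegrable_const
    intro x _
    have h1 : 0 < Real.sqrt (1 - k ^ 2) := Real.sqrt_pos.mpr (by linarith)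
    have h2 : Real.sqrt (1 - k ^ 2) ≤ Real.sqrt (1 - k ^ 2 * Real.sin x ^ 2) :=
      Real.sqrt_le_sqrt (by nlinarith [Real.sin_sq_le_one x, sq_nonneg k])
    exact inv_anti₀ h1 h2
  calc ellipticK k ≤ ∫ _x in (0:ℝ)..(π/2), (Real.sqrt (1 - k ^ 2))⁻¹ := hle
    _ = π / 2 * (Real.sqrt (1 - k ^ 2))⁻¹ := by
        rw [intervalIntegral.integral_const]
        simp

lemma sqrt3_sq : Real.sqrt 3 ^ 2 = 3 := Real.sq_sqrt (by norm_num)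

lemma one_lt_sqrt3 : (1 : ℝ) < Real.sqrt 3 := by
  nlinarith [sqrt3_sq, Real.sqrt_nonneg 3]

/-- the endpoint limits of the area function on `(1, √3)`. -/
theorem stmt_6 :
    Tendsto Ffun (nhdsWithin 1 (Set.Ioi (1 : ℝ))) (nhds 2) ∧
    Tendsto Ffun (nhdsWithin (Real.sqrt 3) (Set.Iio (Real.sqrt 3)))
      (nhds (2 * π / Real.sqrt 3)) := by
  constructor
  · -- limit at 1⁺
    have hkm1 : ContinuousAt kmod 1 := by
      apply ContinuousAt.div
      · exact (Real.continuous_sqrt.comp (by fun_prop)).continuousAt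
      · fun_prop
      · norm_num
    have hkmod1 : kmod 1 = 1 := by
      have : Real.sqrt ((1 + (1:ℝ) ^ 2) * (3 - 1 ^ 2)) = 2 := by
        rw [show (1 + (1:ℝ) ^ 2) * (3 - 1 ^ 2) = 2 ^ 2 by norm_num, Real.sqrt_sq (by norm_num)]
      rw [kmod, this]
      norm_num
    have hE : Tendsto (fun r => 2 * r * ellipticE (kmod r))
        (nhdsWithin 1 (Set.Ioi (1:ℝ))) (nhds 2) := by
      have hc : ContinuousAt (fun r => 2 * r * ellipticE (kmod r)) 1 :=
        (continuousAt_const.mul continuousAt_id).mul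
          (ellipticE_continuous.continuousAt.comp hkm1)
      have := hc.tendsto.mono_left (nhdsWithin_le_nhds (s := Set.Ioi (1:ℝ)))
      simpa [hkmod1, ellipticE_one] using this
    have hK : Tendsto (fun r => (1 - r ^ 2) / r * ellipticK (kmod r))
        (nhdsWithin 1 (Set.Ioi (1:ℝ))) (nhds 0) := by
      have hB : Tendsto (fun r => π * Real.sqrt (r ^ 2 - 1) / Real.sqrt (r ^ 2 + 3))
          (nhdsWithin 1 (Set.Ioi (1:ℝ))) (nhds 0) := by
        have hc : ContinuousAt (fun r : ℝ => π * Real.sqrt (r ^ 2 - 1) / Real.sqrt (r ^ 2 + 3)) 1 := by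
          apply ContinuousAt.div
          · exact continuousAt_const.mul (Real.continuous_sqrt.comp (by fun_prop)).continuousAt
          · exact (Real.continuous_sqrt.comp (by fun_prop)).continuousAt
          · exact ne_of_gt (Real.sqrt_pos.mpr (by norm_num))
        have := hc.tendsto.mono_left (nhdsWithin_le_nhds (s := Set.Ioi (1:ℝ)))
        simpa using this
      apply squeeze_zero_norm' _ hB
      have hmem : Set.Ioo (1:ℝ) (Real.sqrt 3) ∈ nhdsWithin 1 (Set.Ioi (1:ℝ)) :=
        Ioo_mem_nhdsGT_of_mem ⟨le_refl 1, one_lt_sqrt3⟩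
      filter_upwards [hmem] with r hr
      obtain ⟨hr1, hr3⟩ := hr
      have hr0 : 0 < r := by linarith
      have hr2lt : r ^ 2 < 3 := by
        nlinarith [sqrt3_sq, Real.sqrt_nonneg 3]
      set a := Real.sqrt (r ^ 2 - 1) with ha
      set b := Real.sqrt (r ^ 2 + 3) with hb
      have ha2 : a ^ 2 = r ^ 2 - 1 := Real.sq_sqrt (by nlinarith)
      have hb2 : b ^ 2 = r ^ 2 + 3 := Real.sq_sqrt (by nlinarith)
      have ha0 : 0 < a := Real.sqrt_pos.mpr (by nlinarith)
      have hb0 : 0 < b := Real.sqrt_pos.mpr (by nlinarith)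
      have hkmsq : kmod r ^ 2 = (1 + r ^ 2) * (3 - r ^ 2) / (4 * r ^ 2) := by
        rw [kmod, div_pow, Real.sq_sqrt (by nlinarith)]
        ring_nf
      have hone_sub : 1 - kmod r ^ 2 = (a * b / (2 * r)) ^ 2 := by
        have h1 : (a * b / (2 * r)) ^ 2 = (r ^ 2 - 1) * (r ^ 2 + 3) / (4 * r ^ 2) := by
          rw [div_pow, mul_pow, ha2, hb2]
          ring
        rw [hkmsq, h1]
        field_simp
        ring
      have hab0 : 0 < a * b / (2 * r) := div_pos (mul_pos ha0 hb0) (by linarith)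
      have hklt : kmod r ^ 2 < 1 := by
        have := pow_pos hab0 2
        linarith [hone_sub]
      have hsq : Real.sqrt (1 - kmod r ^ 2) = a * b / (2 * r) := by
        rw [hone_sub, Real.sqrt_sq hab0.le]
      have hKle := ellipticK_le hklt
      rw [hsq] at hKle
      have hK0 := ellipticK_nonneg (kmod r)
      have habs : ‖(1 - r ^ 2) / r * ellipticK (kmod r)‖
          = (r ^ 2 - 1) / r * ellipticK (kmod r) := by
        rw [Real.norm_eq_abs, abs_mul, abs_div, abs_of_nonpos (by nlinarith),
          abs_of_pos hr0, abs_of_nonneg hK0]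
        ring
      rw [habs]
      have hbound : (r ^ 2 - 1) / r * (π / 2 * (a * b / (2 * r))⁻¹)
          = π * a / b := by
        have : r ^ 2 - 1 = a ^ 2 := ha2.symm
        rw [this]
        field_simp
      calc (r ^ 2 - 1) / r * ellipticK (kmod r)
          ≤ (r ^ 2 - 1) / r * (π / 2 * (a * b / (2 * r))⁻¹) := by
            apply mul_le_mul_of_nonneg_left hKle
            exact div_nonneg (by nlinarith) hr0.le
        _ = π * a / b := hbound
    have := hK.add hE
    rw [zero_add] at this
    exact this
  · -- limit at √3⁻
    have hs0 : (0:ℝ) < Real.sqrt 3 := by positivity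
    have hkm : ContinuousAt kmod (Real.sqrt 3) := by
      apply ContinuousAt.div
      · exact (Real.continuous_sqrt.comp (by fun_prop)).continuousAt
      · fun_prop
      · positivity
    have hk0 : kmod (Real.sqrt 3) = 0 := by
      rw [kmod, sqrt3_sq]
      norm_num
    have htk : Tendsto kmod (nhds (Real.sqrt 3)) (nhds 0) := by
      have := hkm.tendsto
      rwa [hk0] at this
    have hK : Tendsto (fun r => ellipticK (kmod r)) (nhds (Real.sqrt 3)) (nhds (π / 2)) :=
      ellipticK_tendsto_zero.comp htk
    have hE : Tendsto (fun r => ellipticE (kmod r)) (nhds (Real.sqrt 3)) (nhds (π / 2)) := by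
      have := (ellipticE_continuous.continuousAt.comp hkm).tendsto
      rwa [Function.comp, hk0, ellipticE_zero] at this
    have hc1 : Tendsto (fun r : ℝ => (1 - r ^ 2) / r) (nhds (Real.sqrt 3))
        (nhds ((1 - Real.sqrt 3 ^ 2) / Real.sqrt 3)) := by
      apply ContinuousAt.tendsto
      exact ContinuousAt.div (by fun_prop) continuousAt_id (ne_of_gt hs0)
    have hc2 : Tendsto (fun r : ℝ => 2 * r) (nhds (Real.sqrt 3)) (nhds (2 * Real.sqrt 3)) :=
      (continuous_const.mul continuous_id).tendsto _
    have hmain : Tendsto Ffun (nhds (Real.sqrt 3))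
        (nhds ((1 - Real.sqrt 3 ^ 2) / Real.sqrt 3 * (π / 2) + 2 * Real.sqrt 3 * (π / 2))) :=
      (hc1.mul hK).add (hc2.mul hE)
    have hval : (1 - Real.sqrt 3 ^ 2) / Real.sqrt 3 * (π / 2) + 2 * Real.sqrt 3 * (π / 2)
        = 2 * π / Real.sqrt 3 := by
      rw [sqrt3_sq]
      field_simp
      linear_combination 2 * sqrt3_sq
    rw [hval] at hmain
    exact hmain.mono_left nhdsWithin_le_nhds
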